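/- A real polynomial f of positive degree with decomposition f(x) = p(x²) + x·q(x²) is stable if and only if p(0)·q(0) > 0 and the polynomials p and q have only simple zeros, all negative, which interlace, with the rightmost zero (the one closest to 0) belonging to p. -/

import Mathlib

open Polynomial

/-- `a` and `b` are consecutive roots of `p`. -/
def ConsecRoots (p : Polynomial ℝ) (a b : ℝ) : Prop :=
  p.IsRoot a ∧ p.IsRoot b ∧ a < b ∧ ∀ c : ℝ, a < c → c < b → ¬ p.IsRoot c

/-- The roots of `p` and `q` strictly interlace: between any two consecutive
roots of one polynomial lies exactly one root of the other. -/
def StrictlyInterlace (p q : Polynomial ℝ) : Prop :=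
  (∀ a b : ℝ, ConsecRoots p a b → ∃! c : ℝ, q.IsRoot c ∧ a < c ∧ c < b) ∧
  (∀ a b : ℝ, ConsecRoots q a b → ∃! c : ℝ, p.IsRoot c ∧ a < c ∧ c < b)


section Helpers

variable {α : Type*}

lemma msum_lt (s : Multiset α) (hs : s ≠ 0) (g h : α → ℝ)
    (hlt : ∀ a ∈ s, g a < h a) : (s.map g).sum < (s.map h).sum := by
  obtain ⟨a, ha⟩ := Multiset.exists_mem_of_ne_zero hs
  obtain ⟨t, rfl⟩ := Multiset.exists_cons_of_mem ha
  simp only [Multiset.map_cons, Multiset.sum_cons]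
  have h1 : g a < h a := hlt a (Multiset.mem_cons_self a t)
  have h2 : (t.map g).sum ≤ (t.map h).sum :=
    Multiset.sum_map_le_sum_map _ _ fun i hi => (hlt i (Multiset.mem_cons_of_mem hi)).le
  linarith

lemma msum_lt_const (s : Multiset α) (hs : s ≠ 0) (g : α → ℝ) (c : ℝ)
    (hlt : ∀ a ∈ s, g a < c) : (s.map g).sum < s.card * c := by
  have := msum_lt s hs g (fun _ => c) hlt
  simpa [Multiset.sum_replicate, Multiset.map_const'] using this

lemma cont_msum (s : Multiset α) (F : α → ℝ → ℝ) (h : ∀ a ∈ s, Continuous (F a)) :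
    Continuous (fun ω => (s.map (fun a => F a ω)).sum) := by
  induction s using Multiset.induction with
  | empty => simpa using continuous_const
  | cons a t ih =>
      simp only [Multiset.map_cons, Multiset.sum_cons]
      exact (h a (Multiset.mem_cons_self a t)).add
        (ih fun b hb => h b (Multiset.mem_cons_of_mem hb))

lemma tendsto_msum (s : Multiset α) (F : α → ℝ → ℝ) (L : α → ℝ)
    (h : ∀ a ∈ s, Filter.Tendsto (F a) Filter.atTop (nhds (L a))) :
    Filter.Tendsto (fun ω => (s.map (fun a => F a ω)).sum) Filter.atTop
      (nhds ((s.map L).sum)) := by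
  induction s using Multiset.induction with
  | empty => simpa using tendsto_const_nhds
  | cons a t ih =>
      simp only [Multiset.map_cons, Multiset.sum_cons]
      exact ((h a (Multiset.mem_cons_self a t)).add
        (ih fun b hb => h b (Multiset.mem_cons_of_mem hb)))

lemma mprod_polar (s : Multiset α) (r t : α → ℝ) :
    (s.map (fun a => ((r a : ℝ) : ℂ) * Complex.exp ((t a : ℝ) * Complex.I))).prod
      = (((s.map r).prod : ℝ) : ℂ) * Complex.exp ((((s.map t).sum : ℝ) : ℂ) * Complex.I) := by
  induction s using Multiset.induction with
  | empty => simp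
  | cons a u ih =>
      simp only [Multiset.map_cons, Multiset.prod_cons, Multiset.sum_cons, ih]
      push_cast
      rw [add_mul, Complex.exp_add]
      ring

end Helpers

section Decomp

variable (f p q : ℝ[X])

lemma aeval_dec (hdec : f = p.comp (X ^ 2) + X * q.comp (X ^ 2)) (z : ℂ) :
    aeval z f = aeval (z ^ 2) p + z * aeval (z ^ 2) q := by
  subst hdec; simp [aeval_comp]

lemma aeval_real (x : ℝ) (g : ℝ[X]) : aeval ((x : ℂ)) g = ((g.eval x : ℝ) : ℂ) := by
  rw [show ((x : ℂ)) = algebraMap ℝ ℂ x from rfl, aeval_algebraMap_apply]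
  simp

lemma coeff_even (hdec : f = p.comp (X ^ 2) + X * q.comp (X ^ 2)) (k : ℕ) :
    f.coeff (2 * k) = p.coeff k := by
  subst hdec
  rw [← expand_eq_comp_X_pow, ← expand_eq_comp_X_pow]
  rcases Nat.eq_zero_or_pos k with rfl | hk
  · simp [coeff_expand, mul_comm]
  · rw [coeff_add, coeff_expand (by norm_num : 0 < 2),
      show 2 * k = (2 * k - 1) + 1 by omega, coeff_X_mul,
      coeff_expand (by norm_num : 0 < 2)]
    have h1 : (2 : ℕ) ∣ 2 * k := ⟨k, rfl⟩
    have h2 : ¬ (2 : ℕ) ∣ 2 * k - 1 := by omega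
    rw [show (2*k - 1) + 1 = 2 * k by omega]
    have h3 : 2 * k / 2 = k := by omega
    simp [h1, h2, h3]

lemma coeff_odd (hdec : f = p.comp (X ^ 2) + X * q.comp (X ^ 2)) (k : ℕ) :
    f.coeff (2 * k + 1) = q.coeff k := by
  subst hdec
  rw [← expand_eq_comp_X_pow, ← expand_eq_comp_X_pow, coeff_add, coeff_X_mul,
    coeff_expand (by norm_num : 0 < 2), coeff_expand (by norm_num : 0 < 2)]
  have h1 : (2 : ℕ) ∣ 2 * k := ⟨k, rfl⟩
  have h2 : ¬ (2 : ℕ) ∣ 2 * k + 1 := by omega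
  simp [h1, h2, Nat.mul_div_cancel_left]

end Decomp

lemma struct (p : ℝ[X]) (hp0 : p ≠ 0)
    (h2 : ∀ z : ℂ, aeval z p = 0 → ∃ x : ℝ, x < 0 ∧ z = (x : ℂ))
    (h4 : ∀ x : ℝ, p.rootMultiplicity x ≤ 1) :
    p.roots.Nodup ∧ (Multiset.card p.roots = p.natDegree) ∧ (∀ x ∈ p.roots, x < 0) ∧
    p = C p.leadingCoeff * (p.roots.map fun x => X - C x).prod := by
  set φ := algebraMap ℝ ℂ
  have hφ : Function.Injective φ := (algebraMap ℝ ℂ).injective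
  set mp := p.map φ with hmp
  have hmp0 : mp ≠ 0 := (Polynomial.map_ne_zero_iff hφ).mpr hp0
  have hsplit : mp.Splits := IsAlgClosed.splits mp
  have hprod : mp = C mp.leadingCoeff * (mp.roots.map fun z => X - C z).prod :=
    hsplit.eq_prod_roots
  have hlc : mp.leadingCoeff = φ p.leadingCoeff := leadingCoeff_map_of_injective hφ p
  -- every complex root is real
  have hre : ∀ z ∈ mp.roots, z = ((z.re : ℝ) : ℂ) := by
    intro z hz
    have hz0 : aeval z p = 0 := by
      rw [aeval_def, ← eval_map]
      exact (mem_roots hmp0).mp hz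
    obtain ⟨x, _, hx⟩ := h2 z hz0
    rw [hx]; simp
  set T : Multiset ℝ := mp.roots.map Complex.re with hT
  -- p equals the real product
  have hmapT : Polynomial.map φ (C p.leadingCoeff * (T.map fun x => X - C x).prod) = mp := by
    rw [Polynomial.map_mul, Polynomial.map_C, Polynomial.map_multiset_prod, hT]
    rw [Multiset.map_map, Multiset.map_map]
    have : ∀ z ∈ mp.roots,
        ((Polynomial.map φ) ∘ (fun x : ℝ => X - C x) ∘ Complex.re) z = X - C z := by
      intro z hz
      simp only [Function.comp_apply, Polynomial.map_sub, map_X, map_C]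
      congr 1
      rw [show φ z.re = ((z.re : ℝ) : ℂ) from rfl, ← hre z hz]
    rw [show ((Polynomial.map φ ∘ fun x : ℝ => X - C x) ∘ Complex.re)
      = ((Polynomial.map φ) ∘ (fun x : ℝ => X - C x) ∘ Complex.re) from rfl]
    rw [Multiset.map_congr rfl this]
    conv_rhs => rw [hprod, hlc]
  have hpeq : p = C p.leadingCoeff * (T.map fun x => X - C x).prod := by
    apply Polynomial.map_injective φ hφ
    rw [hmapT]
  have hlc0 : p.leadingCoeff ≠ 0 := leadingCoeff_ne_zero.mpr hp0
  have hroots : p.roots = T := by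
    rw [hpeq, roots_C_mul _ hlc0, roots_multiset_prod_X_sub_C]
  have hcard : Multiset.card p.roots = p.natDegree := by
    rw [hroots, hT, Multiset.card_map]
    rw [splits_iff_card_roots.mp hsplit]
    exact natDegree_map_eq_of_injective hφ p
  have hnodup : p.roots.Nodup := by
    rw [Multiset.nodup_iff_count_le_one]
    intro x
    rw [count_roots]
    exact h4 x
  refine ⟨hnodup, hcard, ?_, by rw [← hroots] at hpeq; exact hpeq⟩
  intro x hx
  have hx0 : aeval ((x : ℂ)) p = 0 := by
    rw [show ((x:ℂ)) = φ x from rfl, aeval_algebraMap_apply]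
    have : p.eval x = 0 := (mem_roots hp0).mp hx
    simp [this]
  obtain ⟨y, hy, hxy⟩ := h2 _ hx0
  have : x = y := by exact_mod_cast hxy
  linarith

section Comb

variable (p q : ℝ[X]) (A B : Finset ℝ)
  (hA : ∀ x, p.IsRoot x ↔ x ∈ A) (hB : ∀ x, q.IsRoot x ↔ x ∈ B)
  (hint : StrictlyInterlace p q)
  (h7 : ∀ x : ℝ, q.IsRoot x → ∃ y : ℝ, p.IsRoot y ∧ x < y)

include hA hB hint h7

/-- if `s` is a root of `q` then there's a least root of `p` above `s`;
`nxt` facts: root, greater, minimal. -/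
lemma nxt_exists (s : ℝ) (hs : q.IsRoot s) :
    ∃ b : ℝ, p.IsRoot b ∧ s < b ∧ ∀ t, p.IsRoot t → s < t → b ≤ t := by
  obtain ⟨y, hy, hsy⟩ := h7 s hs
  have hne : (A.filter (fun t => s < t)).Nonempty :=
    ⟨y, Finset.mem_filter.mpr ⟨(hA y).mp hy, hsy⟩⟩
  refine ⟨(A.filter (fun t => s < t)).min' hne, ?_, ?_, ?_⟩
  · have := (A.filter (fun t => s < t)).min'_mem hne
    exact (hA _).mpr (Finset.mem_filter.mp this).1
  · exact (Finset.mem_filter.mp ((A.filter (fun t => s < t)).min'_mem hne)).2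
  · intro t ht hst
    exact Finset.min'_le _ t (Finset.mem_filter.mpr ⟨(hA t).mp ht, hst⟩)

/-- no common roots -/
lemma no_common (x : ℝ) (hpx : p.IsRoot x) (hqx : q.IsRoot x) : False := by
  obtain ⟨b, hb, hxb, hbmin⟩ := nxt_exists p q A B hA hB hint h7 x hqx
  have hcons : ConsecRoots p x b := by
    refine ⟨hpx, hb, hxb, ?_⟩
    intro c hxc hcb hc
    exact absurd (hbmin c hc hxc) (not_le.mpr hcb)
  obtain ⟨s, ⟨hsq, hxs, hsb⟩, _⟩ := hint.1 x b hcons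
  -- least q-root above x
  have hne : (B.filter (fun t => x < t)).Nonempty :=
    ⟨s, Finset.mem_filter.mpr ⟨(hB s).mp hsq, hxs⟩⟩
  set s1 := (B.filter (fun t => x < t)).min' hne with hs1
  have hs1mem := Finset.mem_filter.mp ((B.filter (fun t => x < t)).min'_mem hne)
  have hs1q : q.IsRoot s1 := (hB s1).mpr hs1mem.1
  have hxs1 : x < s1 := hs1mem.2
  have hs1le : s1 ≤ s := Finset.min'_le _ s (Finset.mem_filter.mpr ⟨(hB s).mp hsq, hxs⟩)
  have hconsq : ConsecRoots q x s1 := by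
    refine ⟨hqx, hs1q, hxs1, ?_⟩
    intro c hxc hcs1 hc
    exact absurd (Finset.min'_le _ c (Finset.mem_filter.mpr ⟨(hB c).mp hc, hxc⟩))
      (not_le.mpr hcs1)
  obtain ⟨t, ⟨hpt, hxt, hts1⟩, _⟩ := hint.2 x s1 hconsq
  exact hcons.2.2.2 t hxt (lt_of_lt_of_le (lt_of_lt_of_le hts1 hs1le) hsb.le) hpt

/-- injectivity of nxt -/
lemma nxt_inj (s s' b : ℝ) (hs : q.IsRoot s) (hs' : q.IsRoot s') (hss' : s < s')
    (hbs : p.IsRoot b ∧ s < b ∧ ∀ t, p.IsRoot t → s < t → b ≤ t)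
    (hbs' : p.IsRoot b ∧ s' < b ∧ ∀ t, p.IsRoot t → s' < t → b ≤ t) : False := by
  obtain ⟨hbp, hsb, hmin⟩ := hbs
  -- least q-root above s
  have hne : (B.filter (fun t => s < t)).Nonempty :=
    ⟨s', Finset.mem_filter.mpr ⟨(hB s').mp hs', hss'⟩⟩
  set s2 := (B.filter (fun t => s < t)).min' hne with hs2
  have hs2mem := Finset.mem_filter.mp ((B.filter (fun t => s < t)).min'_mem hne)
  have hs2q : q.IsRoot s2 := (hB s2).mpr hs2mem.1
  have hss2 : s < s2 := hs2mem.2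
  have hs2le : s2 ≤ s' := Finset.min'_le _ s' (Finset.mem_filter.mpr ⟨(hB s').mp hs', hss'⟩)
  have hconsq : ConsecRoots q s s2 := by
    refine ⟨hs, hs2q, hss2, ?_⟩
    intro c hsc hcs2 hc
    exact absurd (Finset.min'_le _ c (Finset.mem_filter.mpr ⟨(hB c).mp hc, hsc⟩))
      (not_le.mpr hcs2)
  obtain ⟨t, ⟨hpt, hst, hts2⟩, _⟩ := hint.2 s s2 hconsq
  -- t is a p-root in (s, s2), but b minimal p-root above s and b > s'
  have : b ≤ t := hmin t hpt hst
  have : s' < t := lt_of_lt_of_le hbs'.2.1 this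
  linarith [hs2le]

/-- surjectivity: every p-root b above a p-root r is `nxt` of some q-root above r -/
lemma nxt_surj (r b : ℝ) (hr : p.IsRoot r) (hb : p.IsRoot b) (hrb : r < b) :
    ∃ s, q.IsRoot s ∧ r < s ∧ (p.IsRoot b ∧ s < b ∧ ∀ t, p.IsRoot t → s < t → b ≤ t) := by
  -- greatest p-root below b
  have hne : (A.filter (fun t => t < b)).Nonempty :=
    ⟨r, Finset.mem_filter.mpr ⟨(hA r).mp hr, hrb⟩⟩
  set a' := (A.filter (fun t => t < b)).max' hne with ha'
  have ha'mem := Finset.mem_filter.mp ((A.filter (fun t => t < b)).max'_mem hne)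
  have ha'p : p.IsRoot a' := (hA a').mpr ha'mem.1
  have ha'b : a' < b := ha'mem.2
  have hra' : r ≤ a' := by
    rw [ha']
    exact Finset.le_max' (A.filter (fun t => t < b)) r
      (Finset.mem_filter.mpr ⟨(hA r).mp hr, hrb⟩)
  have hcons : ConsecRoots p a' b := by
    refine ⟨ha'p, hb, ha'b, ?_⟩
    intro c hac hcb hc
    have : c ≤ a' := by
      rw [ha']
      exact Finset.le_max' (A.filter (fun t => t < b)) c
        (Finset.mem_filter.mpr ⟨(hA c).mp hc, hcb⟩)
    linarith
  obtain ⟨s, ⟨hsq, has, hsb⟩, _⟩ := hint.1 a' b hcons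
  refine ⟨s, hsq, lt_of_le_of_lt hra' has, hb, hsb, ?_⟩
  intro t hpt hst
  by_contra hlt
  push_neg at hlt
  exact hcons.2.2.2 t (has.trans hst) hlt hpt

/-- count equality at a p-root -/
lemma count_eq (r : ℝ) (hr : p.IsRoot r) :
    (B.filter (fun t => r < t)).card = (A.filter (fun t => r < t)).card := by
  classical
  -- bijection via nxt
  have hex : ∀ s ∈ B.filter (fun t => r < t),
      ∃ bb : ℝ, p.IsRoot bb ∧ s < bb ∧ ∀ t, p.IsRoot t → s < t → bb ≤ t := by
    intro s hsmem
    exact nxt_exists p q A B hA hB hint h7 s ((hB s).mpr (Finset.mem_filter.mp hsmem).1)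
  choose nxt hnxt using hex
  apply Finset.card_bij (fun s hs => nxt s hs)
  · intro s hs
    obtain ⟨h1, h2, _⟩ := hnxt s hs
    have hrs : r < s := (Finset.mem_filter.mp hs).2
    exact Finset.mem_filter.mpr ⟨(hA _).mp h1, lt_trans hrs h2⟩
  · intro s hs s' hs' heq
    by_contra hne
    rcases lt_or_gt_of_ne hne with h | h
    · exact nxt_inj p q A B hA hB hint h7 s s' (nxt s hs)
        ((hB s).mpr (Finset.mem_filter.mp hs).1) ((hB s').mpr (Finset.mem_filter.mp hs').1)
        h (hnxt s hs) (heq ▸ hnxt s' hs')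
    · exact nxt_inj p q A B hA hB hint h7 s' s (nxt s hs)
        ((hB s').mpr (Finset.mem_filter.mp hs').1) ((hB s).mpr (Finset.mem_filter.mp hs).1)
        h (heq ▸ hnxt s' hs') (hnxt s hs)
  · intro b hbmem
    have hbp : p.IsRoot b := (hA b).mpr (Finset.mem_filter.mp hbmem).1
    have hrb : r < b := (Finset.mem_filter.mp hbmem).2
    obtain ⟨s, hsq, hrs, hfacts⟩ := nxt_surj p q A B hA hB hint h7 r b hr hbp hrb
    have hsmem : s ∈ B.filter (fun t => r < t) :=
      Finset.mem_filter.mpr ⟨(hB s).mp hsq, hrs⟩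
    refine ⟨s, hsmem, ?_⟩
    -- nxt s hsmem = b by uniqueness of least element
    obtain ⟨h1, h2, h3⟩ := hnxt s hsmem
    obtain ⟨g1, g2, g3⟩ := hfacts
    exact le_antisymm (h3 b g1 g2) (g3 _ h1 h2)

/-- q has at most as many roots as p -/
lemma card_le : B.card ≤ A.card := by
  classical
  have hex : ∀ s ∈ B,
      ∃ bb : ℝ, p.IsRoot bb ∧ s < bb ∧ ∀ t, p.IsRoot t → s < t → bb ≤ t := by
    intro s hsmem
    exact nxt_exists p q A B hA hB hint h7 s ((hB s).mpr hsmem)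
  choose nxt hnxt using hex
  apply Finset.card_le_card_of_injOn (fun s => if hs : s ∈ B then nxt s hs else 0)
  · intro s hs
    simp only [Finset.mem_coe] at hs
    simp only [hs, dif_pos]
    exact (hA _).mp (hnxt s hs).1
  · intro s hs s' hs' heq
    simp only [Finset.mem_coe] at hs hs'
    simp only [hs, hs', dif_pos] at heq
    by_contra hne
    rcases lt_or_gt_of_ne hne with h | h
    · exact nxt_inj p q A B hA hB hint h7 s s' (nxt s hs)
        ((hB s).mpr hs) ((hB s').mpr hs') h (hnxt s hs) (heq ▸ hnxt s' hs')
    · exact nxt_inj p q A B hA hB hint h7 s' s (nxt s hs)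
        ((hB s').mpr hs') ((hB s).mpr hs) h (heq ▸ hnxt s' hs') (hnxt s hs)

end Comb

section SignHelpers

lemma prod_sign_aux (S : Finset ℝ) (t : ℝ) (h : ∀ x ∈ S, x ≠ t) :
    0 < (-1 : ℝ) ^ ((S.filter (fun x => t < x)).card) * ∏ x ∈ S, (t - x) := by
  classical
  rw [← Finset.prod_filter_mul_prod_filter_not S (fun x => t < x)]
  have h1 : (-1 : ℝ) ^ ((S.filter (fun x => t < x)).card)
        * ∏ x ∈ S.filter (fun x => t < x), (t - x)
      = ∏ x ∈ S.filter (fun x => t < x), (x - t) := by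
    rw [← Finset.prod_const]
    rw [← Finset.prod_mul_distrib]
    apply Finset.prod_congr rfl
    intro x _; ring
  rw [← mul_assoc, h1]
  apply mul_pos
  · apply Finset.prod_pos
    intro x hx
    have := (Finset.mem_filter.mp hx).2
    linarith
  · apply Finset.prod_pos
    intro x hx
    obtain ⟨hxS, hnlt⟩ := Finset.mem_filter.mp hx
    have hne := h x hxS
    have : x < t := lt_of_le_of_ne (not_lt.mp hnlt) hne
    linarith

lemma natDegree_lt_of_coeff (h : ℝ[X]) {m : ℕ} (hm : 0 < m) (hle : h.natDegree ≤ m)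
    (hc : h.coeff m = 0) : h.natDegree < m := by
  rcases lt_or_eq_of_le hle with h' | h'
  · exact h'
  · exfalso
    by_cases h0 : h = 0
    · rw [h0] at h'; simp at h'; omega
    · have := Polynomial.leadingCoeff_ne_zero.mpr h0
      rw [Polynomial.leadingCoeff, h'] at this
      exact this hc

lemma sq_ne_real_neg (z : ℂ) (x : ℝ) (hz : 0 < z.re) (hx : x < 0) : z ^ 2 - (x : ℂ) ≠ 0 := by
  intro h
  rw [sub_eq_zero] at h
  have him : (z ^ 2).im = 0 := by rw [h]; simp
  have hre : (z ^ 2).re = x := by rw [h]; simp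
  rw [pow_two, Complex.mul_im] at him
  rw [pow_two, Complex.mul_re] at hre
  have hzim : z.im = 0 := by nlinarith
  nlinarith

lemma re_div_pos (z : ℂ) (r : ℝ) (hz : 0 < z.re) (hr : r < 0) :
    0 < (z / (z ^ 2 - (r : ℂ))).re := by
  have hu : z ^ 2 - (r : ℂ) ≠ 0 := sq_ne_real_neg z r hz hr
  rw [Complex.div_re]
  have hns : 0 < Complex.normSq (z ^ 2 - (r : ℂ)) := Complex.normSq_pos.mpr hu
  rw [← add_div]
  apply div_pos _ hns
  have hure : (z ^ 2 - (r : ℂ)).re = z.re * z.re - z.im * z.im - r := by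
    simp [pow_two, Complex.mul_re]
  have huim : (z ^ 2 - (r : ℂ)).im = z.re * z.im + z.im * z.re := by
    simp [pow_two, Complex.mul_im]
  rw [hure, huim]
  nlinarith [sq_nonneg z.im, sq_nonneg z.re]

end SignHelpers

-- eval formulas from the struct product
lemma eval_formula (p : ℝ[X]) (hnodup : p.roots.Nodup)
    (hprod : p = C p.leadingCoeff * (p.roots.map fun x => X - C x).prod) (t : ℝ) :
    p.eval t = p.leadingCoeff * ∏ x ∈ (⟨p.roots, hnodup⟩ : Finset ℝ), (t - x) := by
  conv_lhs => rw [hprod]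
  rw [eval_mul, eval_C, eval_multiset_prod, Multiset.map_map]
  congr 1
  rw [Finset.prod]
  congr 1
  apply Multiset.map_congr rfl
  intro x _
  simp

lemma aeval_formula (p : ℝ[X]) (hnodup : p.roots.Nodup)
    (hprod : p = C p.leadingCoeff * (p.roots.map fun x => X - C x).prod) (z : ℂ) :
    aeval z p = (p.leadingCoeff : ℂ) * ∏ x ∈ (⟨p.roots, hnodup⟩ : Finset ℝ), (z - (x : ℂ)) := by
  conv_lhs => rw [hprod]
  rw [map_mul, aeval_C]
  rw [show (aeval z) (p.roots.map fun x => X - C x).prod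
      = ((p.roots.map fun x => X - C x).map (aeval z)).prod from map_multiset_prod (aeval z) _]
  rw [Multiset.map_map]
  congr 1
  rw [Finset.prod]
  congr 1
  apply Multiset.map_congr rfl
  intro x _
  simp

theorem converse (f p q : ℝ[X])
    (hdec : f = p.comp (X ^ 2) + X * q.comp (X ^ 2))
    (h1 : 0 < p.eval 0 * q.eval 0)
    (h2 : ∀ z : ℂ, aeval z p = 0 → ∃ x : ℝ, x < 0 ∧ z = (x : ℂ))
    (h3 : ∀ z : ℂ, aeval z q = 0 → ∃ x : ℝ, x < 0 ∧ z = (x : ℂ))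
    (h4 : ∀ x : ℝ, p.rootMultiplicity x ≤ 1)
    (h5 : ∀ x : ℝ, q.rootMultiplicity x ≤ 1)
    (h6 : StrictlyInterlace p q)
    (h7 : ∀ x : ℝ, q.IsRoot x → ∃ y : ℝ, p.IsRoot y ∧ x < y) :
    ∀ z : ℂ, aeval z f = 0 → z.re < 0 := by
  classical
  have hp00 : p.eval 0 ≠ 0 := fun h => by rw [h] at h1; simp at h1
  have hq00 : q.eval 0 ≠ 0 := fun h => by rw [h] at h1; simp at h1
  have hp0 : p ≠ 0 := fun h => hp00 (by rw [h]; simp)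
  have hq0 : q ≠ 0 := fun h => hq00 (by rw [h]; simp)
  obtain ⟨hnodp, hcardp, hnegp, hprodp⟩ := struct p hp0 h2 h4
  obtain ⟨hnodq, hcardq, hnegq, hprodq⟩ := struct q hq0 h3 h5
  set c := p.leadingCoeff with hcdef
  set d := q.leadingCoeff with hddef
  have hc : c ≠ 0 := leadingCoeff_ne_zero.mpr hp0
  have hd : d ≠ 0 := leadingCoeff_ne_zero.mpr hq0
  set A : Finset ℝ := (⟨p.roots, hnodp⟩ : Finset ℝ) with hAdef
  set B : Finset ℝ := (⟨q.roots, hnodq⟩ : Finset ℝ) with hBdef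
  have hAmem : ∀ x, p.IsRoot x ↔ x ∈ A := by
    intro x
    rw [hAdef]
    constructor
    · intro h; exact (mem_roots hp0).mpr h
    · intro h; exact (mem_roots hp0).mp h
  have hBmem : ∀ x, q.IsRoot x ↔ x ∈ B := by
    intro x
    rw [hBdef]
    constructor
    · intro h; exact (mem_roots hq0).mpr h
    · intro h; exact (mem_roots hq0).mp h
  have hAneg : ∀ x ∈ A, x < 0 := fun x hx => hnegp x hx
  have hBneg : ∀ x ∈ B, x < 0 := fun x hx => hnegq x hx
  have hcardA : A.card = p.natDegree := hcardp
  have hcardB : B.card = q.natDegree := hcardq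
  have hevalp : ∀ t : ℝ, p.eval t = c * ∏ x ∈ A, (t - x) := eval_formula p hnodp hprodp
  have hevalq : ∀ t : ℝ, q.eval t = d * ∏ x ∈ B, (t - x) := eval_formula q hnodq hprodq
  have haevalp : ∀ z : ℂ, aeval z p = (c : ℂ) * ∏ x ∈ A, (z - (x : ℂ)) :=
    aeval_formula p hnodp hprodp
  have nocom : ∀ x : ℝ, p.IsRoot x → q.IsRoot x → False :=
    fun x hx hy => no_common p q A B hAmem hBmem h6 h7 x hx hy
  intro z hz
  rw [aeval_dec f p q hdec z] at hz
  rcases Finset.eq_empty_or_nonempty A with hAe | hAne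
  · -- degenerate case: p constant, hence q constant, f linear
    have hpdeg : p.natDegree = 0 := by rw [← hcardA, hAe]; simp
    have hBe : B = ∅ := by
      by_contra hne
      obtain ⟨s, hs⟩ := Finset.nonempty_of_ne_empty hne
      obtain ⟨y, hy, _⟩ := h7 s ((hBmem s).mpr hs)
      rw [hAmem y, hAe] at hy
      simp at hy
    have hqdeg : q.natDegree = 0 := by rw [← hcardB, hBe]; simp
    have hpC : p = C (p.eval 0) := by
      conv_lhs => rw [eq_C_of_natDegree_eq_zero hpdeg]
      congr 1
      rw [eq_C_of_natDegree_eq_zero hpdeg]; simp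
    have hqC : q = C (q.eval 0) := by
      conv_lhs => rw [eq_C_of_natDegree_eq_zero hqdeg]
      congr 1
      rw [eq_C_of_natDegree_eq_zero hqdeg]; simp
    rw [hpC, hqC] at hz
    simp only [aeval_C] at hz
    set a0 := p.eval 0
    set b0 := q.eval 0
    have hzval : z = -((a0 / b0 : ℝ) : ℂ) := by
      have hb0 : ((b0 : ℝ) : ℂ) ≠ 0 := Complex.ofReal_ne_zero.mpr hq00
      simp only [Complex.coe_algebraMap] at hz
      rw [Complex.ofReal_div, neg_div', eq_div_iff hb0]
      linear_combination hz
    rw [hzval]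
    simp only [Complex.neg_re, Complex.ofReal_re]
    have : 0 < a0 / b0 := by
      rcases mul_pos_iff.mp h1 with ⟨ha, hb⟩ | ⟨ha, hb⟩
      · exact div_pos ha hb
      · exact div_pos_of_neg_of_neg ha hb
    linarith
  · -- main case
    set m := A.card with hm
    have hm1 : 0 < m := Finset.card_pos.mpr hAne
    -- c * d > 0
    have hPA : 0 < ∏ x ∈ A, (0 - x) := Finset.prod_pos (fun x hx => by
      have := hAneg x hx; linarith)
    have hPB : 0 < ∏ x ∈ B, (0 - x) := Finset.prod_pos (fun x hx => by
      have := hBneg x hx; linarith)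
    have hcd : 0 < c * d := by
      rw [hevalp 0, hevalq 0] at h1
      have h1' : 0 < (c * d) * ((∏ x ∈ A, (0 - x)) * ∏ x ∈ B, (0 - x)) := by nlinarith
      rcases mul_pos_iff.mp h1' with ⟨hx, _⟩ | ⟨_, hy⟩
      · exact hx
      · nlinarith
    -- deg q ≤ m
    have hdegq : q.natDegree ≤ m := by
      rw [← hcardB, hm]
      exact card_le p q A B hAmem hBmem h6 h7
    have hdegp : p.natDegree = m := hcardA.symm
    set e := q.coeff m / c with hedef
    have hqcm : q.coeff m = e * c := by rw [hedef, div_mul_cancel₀ _ hc]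
    have he0 : 0 ≤ e := by
      rcases lt_or_eq_of_le hdegq with hlt | heq
      · have : q.coeff m = 0 := coeff_eq_zero_of_natDegree_lt hlt
        rw [hedef, this]; simp
      · have : q.coeff m = d := by rw [hddef, Polynomial.leadingCoeff, heq]
        rw [hedef, this]
        rcases mul_pos_iff.mp hcd with ⟨ha, hb⟩ | ⟨ha, hb⟩
        · exact (div_pos hb ha).le
        · exact (div_pos_of_neg_of_neg hb ha).le
    -- residues
    set D : ℝ → ℝ := fun r => ∏ x ∈ A.erase r, (r - x) with hDdef
    have hDne : ∀ r ∈ A, D r ≠ 0 := by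
      intro r hr
      rw [hDdef]
      apply Finset.prod_ne_zero_iff.mpr
      intro x hx
      have := Finset.ne_of_mem_erase hx
      intro hc'
      apply this
      linarith [sub_eq_zero.mp hc']
    set Ares : ℝ → ℝ := fun r => q.eval r / (c * D r) with hAresdef
    have hArespos : ∀ r ∈ A, 0 < Ares r := by
      intro r hr
      have hrroot : p.IsRoot r := (hAmem r).mpr hr
      set k := (A.filter (fun x => r < x)).card with hk
      have hsignq : 0 < (-1 : ℝ) ^ ((B.filter (fun x => r < x)).card) * ∏ x ∈ B, (r - x) :=
        prod_sign_aux B r (fun x hx hxe => nocom r hrroot (hxe ▸ (hBmem x).mpr hx))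
      have hcnt : (B.filter (fun x => r < x)).card = k :=
        count_eq p q A B hAmem hBmem h6 h7 r hrroot
      rw [hcnt] at hsignq
      have hfilter_erase : (A.erase r).filter (fun x => r < x) = A.filter (fun x => r < x) := by
        ext x
        simp only [Finset.mem_filter, Finset.mem_erase]
        constructor
        · rintro ⟨⟨_, hx⟩, hlt⟩; exact ⟨hx, hlt⟩
        · rintro ⟨hx, hlt⟩; exact ⟨⟨by intro hh; rw [hh] at hlt; exact lt_irrefl r hlt, hx⟩, hlt⟩
      have hsignD : 0 < (-1 : ℝ) ^ k * D r := by
        have := prod_sign_aux (A.erase r) r (fun x hx => Finset.ne_of_mem_erase hx)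
        rw [hfilter_erase] at this
        exact this
      have hone : ((-1 : ℝ) ^ k) * ((-1 : ℝ) ^ k) = 1 := by
        rw [← pow_add]
        exact Even.neg_one_pow ⟨k, rfl⟩
      have hkey : ((-1 : ℝ) ^ k * ∏ x ∈ B, (r - x)) * ((-1 : ℝ) ^ k * D r)
          = (∏ x ∈ B, (r - x)) * D r := by
        calc ((-1 : ℝ) ^ k * ∏ x ∈ B, (r - x)) * ((-1 : ℝ) ^ k * D r)
            = (((-1 : ℝ) ^ k) * ((-1 : ℝ) ^ k)) * ((∏ x ∈ B, (r - x)) * D r) := by ring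
          _ = (∏ x ∈ B, (r - x)) * D r := by rw [hone, one_mul]
      have hprodpos : 0 < (∏ x ∈ B, (r - x)) * D r := by
        rw [← hkey]; exact mul_pos hsignq hsignD
      have hnum : 0 < q.eval r * (c * D r) := by
        rw [hevalq r]
        have : d * (∏ x ∈ B, (r - x)) * (c * D r)
            = (c * d) * ((∏ x ∈ B, (r - x)) * D r) := by ring
        nlinarith [mul_pos hcd hprodpos]
      rw [hAresdef]
      rcases mul_pos_iff.mp hnum with ⟨ha, hb⟩ | ⟨ha, hb⟩
      · exact div_pos ha hb
      · exact div_pos_of_neg_of_neg ha hb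
    -- partial fraction identity
    set g : ℝ[X] := q - C e * p - ∑ r ∈ A, C (Ares r * c) * ∏ x ∈ A.erase r, (X - C x)
      with hgdef
    have hgz : g = 0 := by
      apply eq_zero_of_natDegree_lt_card_of_eval_eq_zero' g A
      · intro r hr
        rw [hgdef]
        simp only [eval_sub, eval_mul, eval_C, eval_finset_sum]
        have hpr : p.eval r = 0 := (hAmem r).mpr hr
        rw [hpr]
        have hsum : ∑ r' ∈ A, Ares r' * c * eval r (∏ x ∈ A.erase r', (X - C x))
            = q.eval r := by
          rw [Finset.sum_eq_single r]
          · rw [eval_prod]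
            have hDr : (∏ x ∈ A.erase r, eval r (X - C x)) = D r := by
              rw [hDdef]; apply Finset.prod_congr rfl; intro x _; simp
            rw [hDr, hAresdef]
            have hcD : c * D r ≠ 0 := mul_ne_zero hc (hDne r hr)
            have := hDne r hr
            field_simp
          · intro r' hr' hne
            rw [eval_prod]
            rw [Finset.prod_eq_zero (Finset.mem_erase.mpr ⟨fun hh => hne hh.symm, hr⟩)]
            · ring
            · simp
          · intro h; exact absurd hr h
        rw [hsum]; ring
      · have hd1 : (q - C e * p).natDegree < m := by
          apply natDegree_lt_of_coeff _ hm1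
          · apply le_trans (natDegree_sub_le _ _)
            apply max_le
            · exact hdegq
            · exact le_trans (natDegree_C_mul_le _ _) hdegp.le
          · rw [coeff_sub, coeff_C_mul, hqcm]
            have : p.coeff m = c := by rw [hcdef, Polynomial.leadingCoeff, hdegp]
            rw [this]; ring
        have hd2 : (∑ r ∈ A, C (Ares r * c) * ∏ x ∈ A.erase r, (X - C x)).natDegree < m := by
          have : ∀ r ∈ A, (C (Ares r * c) * ∏ x ∈ A.erase r, (X - C x)).natDegree ≤ m - 1 := by
            intro r hr
            apply le_trans (natDegree_C_mul_le _ _)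
            have : (∏ x ∈ A.erase r, (X - C x)).natDegree = (A.erase r).card := by
              rw [natDegree_prod]
              · simp
              · intro x _; exact X_sub_C_ne_zero x
            rw [this, Finset.card_erase_of_mem hr]
          apply lt_of_le_of_lt (natDegree_sum_le_of_forall_le _ _ this)
          omega
        rw [hgdef]
        calc (q - C e * p - ∑ r ∈ A, C (Ares r * c) * ∏ x ∈ A.erase r, (X - C x)).natDegree
            ≤ max (q - C e * p).natDegree
              (∑ r ∈ A, C (Ares r * c) * ∏ x ∈ A.erase r, (X - C x)).natDegree :=
              natDegree_sub_le _ _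
          _ < m := max_lt hd1 hd2
    have hq_id : q = C e * p + ∑ r ∈ A, C (Ares r * c) * ∏ x ∈ A.erase r, (X - C x) := by
      have := hgz
      rw [hgdef, sub_sub, sub_eq_zero] at this
      exact this
    -- now the complex analysis
    by_contra hre
    push_neg at hre
    set W : ℂ := z ^ 2 with hW
    rcases lt_or_eq_of_le hre with hzre | hzre
    · -- 0 < z.re
      have hWne : ∀ x ∈ A, W - (x : ℂ) ≠ 0 := fun x hx =>
        sq_ne_real_neg z x hzre (hAneg x hx)
      set P : ℂ := aeval W p with hP
      have hPformula : P = (c : ℂ) * ∏ x ∈ A, (W - (x : ℂ)) := haevalp W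
      have hPne : P ≠ 0 := by
        rw [hPformula]
        apply mul_ne_zero (Complex.ofReal_ne_zero.mpr hc)
        exact Finset.prod_ne_zero_iff.mpr hWne
      have haq : aeval W q = (e : ℂ) * P
          + ∑ r ∈ A, ((Ares r * c : ℝ) : ℂ) * ∏ x ∈ A.erase r, (W - (x : ℂ)) := by
        conv_lhs => rw [hq_id]
        rw [map_add, map_mul, aeval_C, map_sum]
        congr 1
        apply Finset.sum_congr rfl
        intro r hr
        rw [map_mul, aeval_C, map_prod]
        congr 1
        apply Finset.prod_congr rfl
        intro x hx
        simp
      have hterm : ∀ r ∈ A, ((Ares r * c : ℝ) : ℂ) * ∏ x ∈ A.erase r, (W - (x : ℂ))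
          = (Ares r : ℝ) * (P / (W - (r : ℂ))) := by
        intro r hr
        have hprodsplit : ∏ x ∈ A, (W - (x : ℂ))
            = (W - (r : ℂ)) * ∏ x ∈ A.erase r, (W - (x : ℂ)) :=
          (Finset.mul_prod_erase A _ hr).symm
        rw [hPformula, hprodsplit]
        have := hWne r hr
        field_simp
        push_cast
        ring
      rw [Finset.sum_congr rfl hterm] at haq
      -- combine with hz : P + z * aeval W q = 0
      rw [haq] at hz
      -- divide by P: get 1 + z*e + Σ Ares r * (z/(W-r)) = 0
      have hmain : (1 : ℂ) + z * (e : ℂ) + ∑ r ∈ A, (Ares r : ℝ) * (z / (W - (r : ℂ))) = 0 := by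
        have hsums : ∑ r ∈ A, P * (((Ares r : ℝ) : ℂ) * (z / (W - (r : ℂ))))
            = ∑ r ∈ A, z * (((Ares r : ℝ) : ℂ) * (P / (W - (r : ℂ)))) :=
          Finset.sum_congr rfl (fun r hr => by ring)
        have hzP : P * ((1 : ℂ) + z * (e : ℂ) + ∑ r ∈ A, (Ares r : ℝ) * (z / (W - (r : ℂ)))) = 0 := by
          rw [mul_add, mul_add, mul_one, Finset.mul_sum, hsums, ← Finset.mul_sum]
          linear_combination hz
        rcases mul_eq_zero.mp hzP with h | h
        · exact absurd h hPne
        · exact h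
      -- take real parts
      have hre1 : (1 : ℝ) + (z.re * e - z.im * 0) + ∑ r ∈ A, Ares r * (z / (W - (r : ℂ))).re = 0 := by
        have h' := congrArg Complex.re hmain
        simp only [Complex.add_re, Complex.re_sum, Complex.mul_re, Complex.ofReal_re,
          Complex.ofReal_im, Complex.one_re, Complex.zero_re, mul_zero, zero_mul,
          sub_zero] at h'
        simpa using h'
      have hsumpos : 0 < ∑ r ∈ A, Ares r * (z / (W - (r : ℂ))).re := by
        apply Finset.sum_pos _ hAne
        intro r hr
        exact mul_pos (hArespos r hr) (by rw [hW]; exact re_div_pos z r hzre (hAneg r hr))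
      nlinarith [mul_nonneg hzre.le he0]
    · -- z.re = 0
      have him : W = ((-(z.im ^ 2) : ℝ) : ℂ) := by
        rw [hW]
        apply Complex.ext
        · rw [pow_two, Complex.mul_re, ← hzre, Complex.ofReal_re]
          ring
        · rw [pow_two, Complex.mul_im, ← hzre, Complex.ofReal_im]
          ring
      set t : ℝ := -(z.im ^ 2) with ht
      rw [him, aeval_real, aeval_real] at hz
      have hrePart : p.eval t = 0 := by
        have := congrArg Complex.re hz
        simpa [Complex.add_re, Complex.mul_re, ← hzre] using this
      have himPart : z.im * q.eval t = 0 := by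
        have := congrArg Complex.im hz
        simpa [Complex.add_im, Complex.mul_im, ← hzre] using this
      rcases mul_eq_zero.mp himPart with h | h
      · have ht0 : t = 0 := by rw [ht, h]; ring
        rw [ht0] at hrePart
        exact hp00 hrePart
      · exact nocom t hrePart h

open Real Filter

noncomputable def phi (z : ℂ) (ω : ℝ) : ℝ := Real.arctan ((ω - z.im) / (-z.re))

noncomputable def rho (z : ℂ) (ω : ℝ) : ℝ :=
  (-z.re) * Real.sqrt (1 + ((ω - z.im) / (-z.re)) ^ 2)

lemma rho_pos (z : ℂ) (hz : z.re < 0) (ω : ℝ) : 0 < rho z ω := by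
  apply mul_pos (by linarith)
  apply Real.sqrt_pos.mpr
  nlinarith [sq_nonneg ((ω - z.im) / (-z.re))]

lemma factor_polar (z : ℂ) (hz : z.re < 0) (ω : ℝ) :
    (ω : ℂ) * Complex.I - z
      = ((rho z ω : ℝ) : ℂ) * Complex.exp (((phi z ω : ℝ) : ℂ) * Complex.I) := by
  set t : ℝ := (ω - z.im) / (-z.re) with htdef
  have hs : Real.sqrt (1 + t ^ 2) ≠ 0 := by
    intro h
    have := Real.sqrt_eq_zero'.mp h
    nlinarith [sq_nonneg t]
  have hre : (0:ℝ) < -z.re := by linarith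
  have hcos : rho z ω * Real.cos (phi z ω) = -z.re := by
    rw [rho, phi, Real.cos_arctan, ← htdef]
    field_simp
  have hsin : rho z ω * Real.sin (phi z ω) = ω - z.im := by
    rw [rho, phi, Real.sin_arctan, ← htdef]
    have hne : z.re ≠ 0 := by linarith
    have : -z.re * Real.sqrt (1 + t ^ 2) * (t / Real.sqrt (1 + t ^ 2)) = -z.re * t := by
      field_simp
    rw [this, htdef]
    field_simp
  rw [Complex.exp_mul_I, ← Complex.ofReal_cos, ← Complex.ofReal_sin, mul_add,
    ← Complex.ofReal_mul, ← mul_assoc, ← Complex.ofReal_mul, hcos, hsin]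
  apply Complex.ext <;> simp

lemma phi_strictMono (z : ℂ) (hz : z.re < 0) : StrictMono (phi z) := by
  intro a b hab
  apply Real.arctan_strictMono
  have h : (0:ℝ) < -z.re := by linarith
  rw [div_lt_div_iff₀ h h]
  nlinarith

lemma phi_lt (z : ℂ) (ω : ℝ) : phi z ω < π / 2 := Real.arctan_lt_pi_div_two _

lemma phi_tendsto (z : ℂ) (hz : z.re < 0) :
    Tendsto (phi z) atTop (nhds (π / 2)) := by
  apply (tendsto_nhds_of_tendsto_nhdsWithin Real.tendsto_arctan_atTop).comp
  have h1 : Tendsto (fun ω : ℝ => ω - z.im) atTop atTop :=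
    tendsto_atTop_add_const_right _ _ tendsto_id
  exact h1.atTop_div_const (by linarith)

lemma phi_cont (z : ℂ) : Continuous (phi z) :=
  Real.continuous_arctan.comp ((continuous_id.sub continuous_const).div_const _)

lemma msum_map_neg {α : Type*} (s : Multiset α) (g : α → ℝ) :
    (s.map (fun a => - g a)).sum = - (s.map g).sum := by
  induction s using Multiset.induction with
  | empty => simp
  | cons a t ih =>
      simp only [Multiset.map_cons, Multiset.sum_cons, ih]
      ring

noncomputable def Theta (μ : Multiset ℂ) (ω : ℝ) : ℝ := (μ.map (fun z => phi z ω)).sum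

noncomputable def Rfun (μ : Multiset ℂ) (ω : ℝ) : ℝ := (μ.map (fun z => rho z ω)).prod

lemma Rfun_pos (μ : Multiset ℂ) (hneg : ∀ z ∈ μ, z.re < 0) (ω : ℝ) : 0 < Rfun μ ω := by
  rw [Rfun]
  induction μ using Multiset.induction with
  | empty => simp
  | cons a s ih =>
      simp only [Multiset.map_cons, Multiset.prod_cons]
      exact mul_pos (rho_pos a (hneg a (Multiset.mem_cons_self a s)) ω)
        (ih fun z hz => hneg z (Multiset.mem_cons_of_mem hz))

lemma Theta_strictMono (μ : Multiset ℂ) (hμ : μ ≠ 0) (hneg : ∀ z ∈ μ, z.re < 0) :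
    StrictMono (Theta μ) := by
  intro a b hab
  exact msum_lt μ hμ _ _ (fun z hz => phi_strictMono z (hneg z hz) hab)

lemma Theta_cont (μ : Multiset ℂ) : Continuous (Theta μ) :=
  cont_msum μ _ (fun z _ => phi_cont z)

lemma Theta_lt (μ : Multiset ℂ) (hμ : μ ≠ 0) (ω : ℝ) :
    Theta μ ω < (Multiset.card μ) * (π / 2) :=
  msum_lt_const μ hμ _ _ (fun z _ => phi_lt z ω)

lemma Theta_tendsto (μ : Multiset ℂ) (hneg : ∀ z ∈ μ, z.re < 0) :
    Tendsto (Theta μ) atTop (nhds ((Multiset.card μ) * (π / 2))) := by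
  have := tendsto_msum μ (fun z ω => phi z ω) (fun _ => π / 2)
    (fun z hz => phi_tendsto z (hneg z hz))
  show Tendsto (fun ω => (μ.map (fun z => phi z ω)).sum) atTop _
  simpa [Multiset.map_const', Multiset.sum_replicate, nsmul_eq_mul] using this

lemma Theta_zero (μ : Multiset ℂ) (hconj : μ.map (starRingEnd ℂ) = μ) : Theta μ 0 = 0 := by
  have key : Theta μ 0 = - Theta μ 0 := by
    conv_lhs => rw [Theta, ← hconj, Multiset.map_map]
    rw [Theta]
    rw [show ((fun z => phi z 0) ∘ (starRingEnd ℂ)) = fun z => - phi z 0 by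
      funext z
      simp only [Function.comp_apply, phi, Complex.conj_re, Complex.conj_im]
      rw [show (0 - -z.im) / (-z.re) = -((0 - z.im) / (-z.re)) by ring, Real.arctan_neg]]
    rw [msum_map_neg]
  linarith

lemma complex_eq_real_parts {x y u v : ℝ}
    (h : (x : ℂ) + (y : ℂ) * Complex.I = (u : ℂ) + (v : ℂ) * Complex.I) : x = u ∧ y = v := by
  have h1 := congrArg Complex.re h
  have h2 := congrArg Complex.im h
  simp at h1 h2
  exact ⟨h1, h2⟩

section ForwardSetup

lemma f_ne_zero (f : ℝ[X]) (hdeg : 0 < f.natDegree) : f ≠ 0 := by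
  intro h
  rw [h] at hdeg
  simp at hdeg

lemma mu_neg (f : ℝ[X]) (hstab : ∀ z : ℂ, aeval z f = 0 → z.re < 0) : ∀ z ∈ (f.map (algebraMap ℝ ℂ)).roots, z.re < 0 := by
  intro z hz
  apply hstab
  have hne : f.map (algebraMap ℝ ℂ) ≠ 0 := by
    intro h
    have h' : f = 0 := (Polynomial.map_eq_zero_iff (algebraMap ℝ ℂ).injective).mp h
    rw [h'] at hz
    simp at hz
  have := (mem_roots hne).mp hz
  rwa [IsRoot.def, Polynomial.eval_map, ← aeval_def] at this

lemma mu_card (f : ℝ[X]) : Multiset.card (f.map (algebraMap ℝ ℂ)).roots = f.natDegree := by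
  have h1 : Multiset.card (f.map (algebraMap ℝ ℂ)).roots = (f.map (algebraMap ℝ ℂ)).natDegree :=
    splits_iff_card_roots.mp (IsAlgClosed.splits _)
  rw [h1, natDegree_map_eq_of_injective (algebraMap ℝ ℂ).injective f]

lemma mu_conj (f : ℝ[X]) :
    (f.map (algebraMap ℝ ℂ)).roots.map (starRingEnd ℂ) = (f.map (algebraMap ℝ ℂ)).roots := by
  have hmapconj : (f.map (algebraMap ℝ ℂ)).map (starRingEnd ℂ) = f.map (algebraMap ℝ ℂ) := by
    rw [Polynomial.map_map]
    congr 1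
    ext x
    simp [Complex.conj_ofReal]
  conv_rhs => rw [← hmapconj]
  rw [(IsAlgClosed.splits (f.map (algebraMap ℝ ℂ))).roots_map]

lemma f_polar (f : ℝ[X]) (hstab : ∀ z : ℂ, aeval z f = 0 → z.re < 0) (a : ℝ) (ha : a = f.leadingCoeff) (ω : ℝ) :
    aeval ((ω : ℂ) * Complex.I) f
      = ((a : ℝ) : ℂ) * ((Rfun (f.map (algebraMap ℝ ℂ)).roots ω : ℝ) : ℂ)
        * Complex.exp (((Theta (f.map (algebraMap ℝ ℂ)).roots ω : ℝ) : ℂ) * Complex.I) := by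
  set μ := (f.map (algebraMap ℝ ℂ)).roots with hμ
  have hfC : f.map (algebraMap ℝ ℂ)
      = C ((a : ℝ) : ℂ) * (μ.map fun z => X - C z).prod := by
    rw [ha]
    have := (IsAlgClosed.splits (f.map (algebraMap ℝ ℂ))).eq_prod_roots
    rw [leadingCoeff_map_of_injective (algebraMap ℝ ℂ).injective] at this
    exact this
  have heval : aeval ((ω : ℂ) * Complex.I) f
      = ((a : ℝ) : ℂ) * (μ.map fun z => ((ω : ℂ) * Complex.I - z)).prod := by
    rw [aeval_def, ← Polynomial.eval_map, hfC, eval_mul, eval_C, eval_multiset_prod,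
      Multiset.map_map]
    congr 1
    apply congrArg Multiset.prod
    apply Multiset.map_congr rfl
    intro z _
    simp
  rw [heval]
  have hcongr : (μ.map fun z => ((ω : ℂ) * Complex.I - z)).prod
      = (μ.map fun z => ((rho z ω : ℝ) : ℂ)
          * Complex.exp (((phi z ω : ℝ) : ℂ) * Complex.I)).prod := by
    apply congrArg Multiset.prod
    apply Multiset.map_congr rfl
    intro z hz
    exact factor_polar z (mu_neg f hstab z hz) ω
  rw [hcongr, mprod_polar μ (fun z => rho z ω) (fun z => phi z ω), mul_assoc]
  rfl

lemma key_idents (f p q : ℝ[X]) (hdec : f = p.comp (X ^ 2) + X * q.comp (X ^ 2))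
    (hstab : ∀ z : ℂ, aeval z f = 0 → z.re < 0) (a : ℝ) (ha : a = f.leadingCoeff) (ω : ℝ) :
    p.eval (-(ω ^ 2)) = a * Rfun (f.map (algebraMap ℝ ℂ)).roots ω
        * Real.cos (Theta (f.map (algebraMap ℝ ℂ)).roots ω)
      ∧ ω * q.eval (-(ω ^ 2)) = a * Rfun (f.map (algebraMap ℝ ℂ)).roots ω
        * Real.sin (Theta (f.map (algebraMap ℝ ℂ)).roots ω) := by
  set μ := (f.map (algebraMap ℝ ℂ)).roots with hμ
  have h := f_polar f hstab a ha ω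
  rw [aeval_dec f p q hdec] at h
  have hsq : ((ω : ℂ) * Complex.I) ^ 2 = ((-(ω ^ 2) : ℝ) : ℂ) := by
    rw [mul_pow, Complex.I_sq]
    push_cast
    ring
  rw [hsq, aeval_real, aeval_real] at h
  have hL : ((p.eval (-(ω ^ 2)) : ℝ) : ℂ)
      + (ω : ℂ) * Complex.I * ((q.eval (-(ω ^ 2)) : ℝ) : ℂ)
      = ((p.eval (-(ω ^ 2)) : ℝ) : ℂ) + ((ω * q.eval (-(ω ^ 2)) : ℝ) : ℂ) * Complex.I := by
    push_cast
    ring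
  have hR : ((a : ℝ) : ℂ) * ((Rfun μ ω : ℝ) : ℂ)
        * Complex.exp (((Theta μ ω : ℝ) : ℂ) * Complex.I)
      = ((a * Rfun μ ω * Real.cos (Theta μ ω) : ℝ) : ℂ)
        + ((a * Rfun μ ω * Real.sin (Theta μ ω) : ℝ) : ℂ) * Complex.I := by
    rw [Complex.exp_mul_I, ← Complex.ofReal_cos, ← Complex.ofReal_sin]
    push_cast
    ring
  rw [hL, hR] at h
  exact complex_eq_real_parts h

end ForwardSetup

lemma roots_complete (g : ℝ[X]) (hg : g ≠ 0) (N : ℕ) (w : ℕ → ℝ)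
    (hinj : ∀ k k', k < N → k' < N → w k = w k' → k = k')
    (hroot : ∀ k, k < N → g.IsRoot (w k))
    (hdeg : g.natDegree ≤ N) :
    (∀ x, g.rootMultiplicity x ≤ 1) ∧
    (∀ z : ℂ, aeval z g = 0 → ∃ k, k < N ∧ z = ((w k : ℝ) : ℂ)) ∧
    (∀ x : ℝ, g.IsRoot x ↔ ∃ k, k < N ∧ x = w k) := by
  classical
  set S : Finset ℝ := (Finset.range N).image w with hS
  have hinjOn : Set.InjOn w (Finset.range N) := by
    intro k hk k' hk' he
    simp only [Finset.coe_range, Set.mem_Iio] at hk hk'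
    exact hinj k k' hk hk' he
  have hScard : S.card = N := by
    rw [hS, Finset.card_image_of_injOn hinjOn, Finset.card_range]
  have hSsub : S.val ⊆ g.roots := by
    intro x hx
    rw [hS] at hx
    obtain ⟨k, hk, rfl⟩ := Finset.mem_image.mp (Finset.mem_val.mp hx)
    exact (mem_roots hg).mpr (hroot k (Finset.mem_range.mp hk))
  have hSle : S.val ≤ g.roots := (Multiset.le_iff_subset S.nodup).mpr hSsub
  have hcardle : Multiset.card g.roots ≤ N := le_trans (card_roots' g) hdeg
  have heq : S.val = g.roots := Multiset.eq_of_le_of_card_le hSle (by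
    rw [show Multiset.card S.val = S.card from rfl, hScard]; exact hcardle)
  -- complex roots
  set T : Finset ℂ := (Finset.range N).image (fun k => ((w k : ℝ) : ℂ)) with hT
  have hg' : g.map (algebraMap ℝ ℂ) ≠ 0 :=
    (Polynomial.map_ne_zero_iff (algebraMap ℝ ℂ).injective).mpr hg
  have hTcard : T.card = N := by
    rw [hT]
    rw [Finset.card_image_of_injOn (fun k hk k' hk' he => by
      simp only [Finset.coe_range, Set.mem_Iio] at hk hk'
      exact hinj k k' hk hk' (by exact_mod_cast he))]
    exact Finset.card_range N
  have hTsub : T.val ⊆ (g.map (algebraMap ℝ ℂ)).roots := by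
    intro z hz
    rw [hT] at hz
    obtain ⟨k, hk, rfl⟩ := Finset.mem_image.mp (Finset.mem_val.mp hz)
    apply (mem_roots hg').mpr
    rw [IsRoot.def, show ((w k : ℝ) : ℂ) = algebraMap ℝ ℂ (w k) from rfl, Polynomial.eval_map,
      ← aeval_def, aeval_algebraMap_apply]
    have : g.eval (w k) = 0 := hroot k (Finset.mem_range.mp hk)
    simp [this]
  have hCcard : Multiset.card (g.map (algebraMap ℝ ℂ)).roots ≤ N := by
    refine le_trans (card_roots' _) ?_
    rw [natDegree_map_eq_of_injective (algebraMap ℝ ℂ).injective g]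
    exact hdeg
  have heqC : T.val = (g.map (algebraMap ℝ ℂ)).roots :=
    Multiset.eq_of_le_of_card_le ((Multiset.le_iff_subset T.nodup).mpr hTsub) (by
      rw [show Multiset.card T.val = T.card from rfl, hTcard]; exact hCcard)
  refine ⟨?_, ?_, ?_⟩
  · intro x
    rw [← count_roots, ← heq]
    exact Multiset.nodup_iff_count_le_one.mp S.nodup x
  · intro z hz
    have hzr : z ∈ (g.map (algebraMap ℝ ℂ)).roots := by
      apply (mem_roots hg').mpr
      rw [IsRoot.def, Polynomial.eval_map, ← aeval_def]
      exact hz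
    rw [← heqC] at hzr
    obtain ⟨k, hk, he⟩ := Finset.mem_image.mp (Finset.mem_val.mp hzr)
    exact ⟨k, Finset.mem_range.mp hk, he.symm⟩
  · intro x
    constructor
    · intro hx
      have : x ∈ g.roots := (mem_roots hg).mpr hx
      rw [← heq] at this
      obtain ⟨k, hk, he⟩ := Finset.mem_image.mp (Finset.mem_val.mp this)
      exact ⟨k, Finset.mem_range.mp hk, he.symm⟩
    · rintro ⟨k, hk, rfl⟩
      exact hroot k hk

lemma negsq_strict {u v : ℝ} (hu : 0 ≤ u) (huv : u < v) : -(v ^ 2) < -(u ^ 2) := by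
  nlinarith

lemma negsq_lt_rev {u v : ℝ} (hu : 0 ≤ u) (hv : 0 ≤ v) (h : -(v ^ 2) < -(u ^ 2)) : u < v := by
  nlinarith

lemma coszero (k : ℕ) : Real.cos (((2 * k + 1 : ℕ) : ℝ) * (π / 2)) = 0 := by
  rw [Real.cos_eq_zero_iff]
  exact ⟨(k : ℤ), by push_cast; ring⟩

lemma sinzero (j : ℕ) : Real.sin (((2 * j + 2 : ℕ) : ℝ) * (π / 2)) = 0 := by
  have : ((2 * j + 2 : ℕ) : ℝ) * (π / 2) = ((j + 1 : ℕ) : ℝ) * π := by push_cast; ring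
  rw [this]
  exact Real.sin_nat_mul_pi (j + 1)

lemma lvl_lt_iff (i i' : ℕ) : (i : ℝ) * (π / 2) < (i' : ℝ) * (π / 2) ↔ i < i' := by
  rw [mul_lt_mul_iff_left₀ (by positivity : (0:ℝ) < π / 2)]
  exact_mod_cast Nat.cast_lt

theorem forward (f p q : ℝ[X])
    (hdec : f = p.comp (X ^ 2) + X * q.comp (X ^ 2))
    (hdeg : 0 < f.natDegree)
    (hstab : ∀ z : ℂ, aeval z f = 0 → z.re < 0) :
    0 < p.eval 0 * q.eval 0 ∧
      (∀ z : ℂ, aeval z p = 0 → ∃ x : ℝ, x < 0 ∧ z = (x : ℂ)) ∧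
      (∀ z : ℂ, aeval z q = 0 → ∃ x : ℝ, x < 0 ∧ z = (x : ℂ)) ∧
      (∀ x : ℝ, p.rootMultiplicity x ≤ 1) ∧
      (∀ x : ℝ, q.rootMultiplicity x ≤ 1) ∧
      StrictlyInterlace p q ∧
      (∀ x : ℝ, q.IsRoot x → ∃ y : ℝ, p.IsRoot y ∧ x < y) := by
  classical
  set n := f.natDegree with hn
  set a := f.leadingCoeff with ha
  set μ := (f.map (algebraMap ℝ ℂ)).roots with hμ
  set θ : ℝ → ℝ := Theta μ with hθdef
  set R : ℝ → ℝ := Rfun μ with hRdef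
  have hμcard : Multiset.card μ = n := mu_card f
  have hμneg : ∀ z ∈ μ, z.re < 0 := mu_neg f hstab
  have hμ0 : μ ≠ 0 := by
    intro h
    rw [h] at hμcard
    simp at hμcard
    omega
  have hμconj := mu_conj f
  have hmono : StrictMono θ := Theta_strictMono μ hμ0 hμneg
  have hcont : Continuous θ := Theta_cont μ
  have hzero : θ 0 = 0 := Theta_zero μ hμconj
  have hub : ∀ ω, θ ω < n * (π / 2) := by
    intro ω
    have := Theta_lt μ hμ0 ω
    rwa [hμcard] at this
  have hlim : Tendsto θ atTop (nhds (n * (π / 2))) := by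
    have := Theta_tendsto μ hμneg
    rwa [hμcard] at this
  have hR : ∀ ω, 0 < R ω := Rfun_pos μ hμneg
  have hfne : f ≠ 0 := f_ne_zero f hdeg
  have ha0 : a ≠ 0 := leadingCoeff_ne_zero.mpr hfne
  have ha2 : 0 < a ^ 2 := by
    rcases lt_or_gt_of_ne ha0 with h | h <;> nlinarith
  have hkP : ∀ ω : ℝ, p.eval (-(ω ^ 2)) = a * R ω * Real.cos (θ ω) :=
    fun ω => (key_idents f p q hdec hstab a ha ω).1
  have hkQ : ∀ ω : ℝ, ω * q.eval (-(ω ^ 2)) = a * R ω * Real.sin (θ ω) :=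
    fun ω => (key_idents f p q hdec hstab a ha ω).2
  have hp0val : p.eval 0 = a * R 0 := by
    have h := hkP 0
    rw [hzero] at h
    norm_num at h
    exact h
  have hp0 : p.eval 0 ≠ 0 := by
    rw [hp0val]
    exact mul_ne_zero ha0 (hR 0).ne'
  have hpne : p ≠ 0 := fun h => hp0 (by rw [h]; simp)
  have hqne : q ≠ 0 := by
    intro hq0
    obtain ⟨z, hz⟩ := Multiset.exists_mem_of_ne_zero hμ0
    have hne : f.map (algebraMap ℝ ℂ) ≠ 0 :=
      (Polynomial.map_ne_zero_iff (algebraMap ℝ ℂ).injective).mpr hfne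
    have hzf : aeval z f = 0 := by
      have := (mem_roots hne).mp hz
      rwa [IsRoot.def, Polynomial.eval_map, ← aeval_def] at this
    have h1 : aeval (-z) f = 0 := by
      rw [aeval_dec f p q hdec, hq0] at hzf ⊢
      simp only [map_zero, mul_zero, add_zero] at hzf ⊢
      rw [neg_sq]
      exact hzf
    have hz1 := hstab z hzf
    have hz2 := hstab (-z) h1
    rw [Complex.neg_re] at hz2
    linarith
  -- the solver
  have hsolve : ∀ L : ℝ, 0 ≤ L → L < n * (π / 2) → ∃ ω, 0 ≤ ω ∧ θ ω = L := by
    intro L hL0 hLn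
    have hev : ∀ᶠ ω in atTop, L < θ ω := hlim.eventually_const_lt hLn
    obtain ⟨M, hM⟩ := hev.exists
    have hM0 : (0:ℝ) ≤ M := by
      by_contra hM0
      push_neg at hM0
      have := hmono hM0
      rw [hzero] at this
      linarith
    have := intermediate_value_Icc hM0 hcont.continuousOn
    have hLmem : L ∈ Set.Icc (θ 0) (θ M) := ⟨by rw [hzero]; exact hL0, hM.le⟩
    obtain ⟨ω, hωmem, hωeq⟩ := this hLmem
    exact ⟨ω, hωmem.1, hωeq⟩
  set Ω : ℕ → ℝ := fun i =>
    if h : 0 < i ∧ i < n then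
      (hsolve ((i : ℝ) * (π / 2)) (by positivity)
        ((lvl_lt_iff i n).mpr h.2)).choose
    else 0 with hΩdef
  have hΩ : ∀ i : ℕ, 0 < i → i < n → θ (Ω i) = (i : ℝ) * (π / 2) ∧ 0 < Ω i := by
    intro i h1 h2
    have hcond : 0 < i ∧ i < n := ⟨h1, h2⟩
    have hL0 : (0:ℝ) ≤ (i : ℝ) * (π / 2) := by positivity
    have hLn : (i : ℝ) * (π / 2) < n * (π / 2) := (lvl_lt_iff i n).mpr h2
    have hΩeq : Ω i = (hsolve ((i : ℝ) * (π / 2)) hL0 hLn).choose := by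
      simp only [hΩdef]
      rw [dif_pos hcond]
    have hspec := (hsolve ((i : ℝ) * (π / 2)) hL0 hLn).choose_spec
    rw [hΩeq]
    refine ⟨hspec.2, ?_⟩
    have h0lt : θ 0 < θ ((hsolve ((i : ℝ) * (π / 2)) hL0 hLn).choose) := by
      rw [hzero, hspec.2]
      exact mul_pos (by exact_mod_cast h1) (by positivity)
    exact hmono.lt_iff_lt.mp h0lt
  set W : ℕ → ℝ := fun i => -(Ω i ^ 2) with hWdef
  have hWneg : ∀ i : ℕ, 0 < i → i < n → W i < 0 := by
    intro i h1 h2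
    have := (hΩ i h1 h2).2
    simp only [hWdef]
    nlinarith
  have hWlt : ∀ i i' : ℕ, 0 < i → i < n → 0 < i' → i' < n → i < i' → W i' < W i := by
    intro i i' h1 h2 h3 h4 h5
    obtain ⟨he, hp'⟩ := hΩ i h1 h2
    obtain ⟨he', hp''⟩ := hΩ i' h3 h4
    have : Ω i < Ω i' := by
      apply hmono.lt_iff_lt.mp
      rw [he, he']
      exact (lvl_lt_iff i i').mpr h5
    simp only [hWdef]
    exact negsq_strict hp'.le this
  have hWlt_rev : ∀ i i' : ℕ, 0 < i → i < n → 0 < i' → i' < n → W i' < W i → i < i' := by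
    intro i i' h1 h2 h3 h4 h5
    obtain ⟨he, hp'⟩ := hΩ i h1 h2
    obtain ⟨he', hp''⟩ := hΩ i' h3 h4
    simp only [hWdef] at h5
    have hΩlt : Ω i < Ω i' := negsq_lt_rev hp'.le hp''.le h5
    have := hmono hΩlt
    rw [he, he'] at this
    exact (lvl_lt_iff i i').mp this
  set np := n / 2 with hnp
  set nq := (n - 1) / 2 with hnq
  -- roots of p
  have hrootP : ∀ k : ℕ, k < np → p.IsRoot (W (2 * k + 1)) := by
    intro k hk
    have hv1 : 0 < 2 * k + 1 := by omega
    have hv2 : 2 * k + 1 < n := by omega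
    obtain ⟨he, hpos⟩ := hΩ (2 * k + 1) hv1 hv2
    have := hkP (Ω (2 * k + 1))
    rw [he, coszero k] at this
    simp only [hWdef]
    rw [IsRoot.def, this]
    ring
  have hrootQ : ∀ j : ℕ, j < nq → q.IsRoot (W (2 * j + 2)) := by
    intro j hj
    have hv1 : 0 < 2 * j + 2 := by omega
    have hv2 : 2 * j + 2 < n := by omega
    obtain ⟨he, hpos⟩ := hΩ (2 * j + 2) hv1 hv2
    have hkq := hkQ (Ω (2 * j + 2))
    rw [he, sinzero j] at hkq
    simp only [mul_zero] at hkq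
    have := mul_eq_zero.mp hkq
    rcases this with h | h
    · exact absurd h hpos.ne'
    · simp only [hWdef]
      exact h
  have hdegP : p.natDegree ≤ np := by
    apply natDegree_le_iff_coeff_eq_zero.mpr
    intro N hN
    rw [← coeff_even f p q hdec N]
    apply coeff_eq_zero_of_natDegree_lt
    omega
  have hdegQ : q.natDegree ≤ nq := by
    apply natDegree_le_iff_coeff_eq_zero.mpr
    intro N hN
    rw [← coeff_odd f p q hdec N]
    apply coeff_eq_zero_of_natDegree_lt
    omega
  have hinjP : ∀ k k', k < np → k' < np → W (2 * k + 1) = W (2 * k' + 1) → k = k' := by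
    intro k k' hk hk' he
    by_contra hne
    rcases Nat.lt_or_ge k k' with h | h
    · have := hWlt (2 * k + 1) (2 * k' + 1) (by omega) (by omega) (by omega) (by omega) (by omega)
      linarith [he ▸ this]
    · have hklt : k' < k := by omega
      have := hWlt (2 * k' + 1) (2 * k + 1) (by omega) (by omega) (by omega) (by omega) (by omega)
      linarith [he ▸ this]
  have hinjQ : ∀ j j', j < nq → j' < nq → W (2 * j + 2) = W (2 * j' + 2) → j = j' := by
    intro j j' hj hj' he
    by_contra hne
    rcases Nat.lt_or_ge j j' with h | h
    · have := hWlt (2 * j + 2) (2 * j' + 2) (by omega) (by omega) (by omega) (by omega) (by omega)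
      linarith [he ▸ this]
    · have hklt : j' < j := by omega
      have := hWlt (2 * j' + 2) (2 * j + 2) (by omega) (by omega) (by omega) (by omega) (by omega)
      linarith [he ▸ this]
  obtain ⟨multP, complexP, charP⟩ :=
    roots_complete p hpne np (fun k => W (2 * k + 1)) hinjP hrootP hdegP
  obtain ⟨multQ, complexQ, charQ⟩ :=
    roots_complete q hqne nq (fun j => W (2 * j + 2)) hinjQ hrootQ hdegQ
  have cond2 : ∀ z : ℂ, aeval z p = 0 → ∃ x : ℝ, x < 0 ∧ z = (x : ℂ) := by
    intro z hz
    obtain ⟨k, hk, he⟩ := complexP z hz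
    exact ⟨W (2 * k + 1), hWneg _ (by omega) (by omega), he⟩
  have cond3 : ∀ z : ℂ, aeval z q = 0 → ∃ x : ℝ, x < 0 ∧ z = (x : ℂ) := by
    intro z hz
    obtain ⟨j, hj, he⟩ := complexQ z hz
    exact ⟨W (2 * j + 2), hWneg _ (by omega) (by omega), he⟩
  have hap : 0 < a * p.eval 0 := by
    rw [hp0val]
    have hh : a * (a * R 0) = a ^ 2 * R 0 := by ring
    rw [hh]
    exact mul_pos ha2 (hR 0)
  have hq0ne : q.eval 0 ≠ 0 := by
    intro h
    obtain ⟨j, hj, he⟩ := (charQ 0).mp h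
    have := hWneg (2 * j + 2) (by omega) (by omega)
    rw [← he] at this
    exact lt_irrefl 0 this
  have haq : 0 < a * q.eval 0 := by
    have hev : ∀ᶠ ω in nhdsWithin (0:ℝ) (Set.Ioi 0), 0 ≤ a * q.eval (-(ω ^ 2)) := by
      have h1 : ∀ᶠ ω in nhds (0:ℝ), θ ω < π :=
        Filter.Tendsto.eventually_lt_const (by rw [hzero]; exact Real.pi_pos)
          hcont.continuousAt
      filter_upwards [h1.filter_mono nhdsWithin_le_nhds, self_mem_nhdsWithin] with ω hπ hωpos
      have hωpos' : (0:ℝ) < ω := hωpos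
      have hθpos : 0 < θ ω := by
        rw [← hzero]
        exact hmono hωpos'
      have hsin : 0 < Real.sin (θ ω) := Real.sin_pos_of_pos_of_lt_pi hθpos hπ
      have hkey : 0 < ω * (a * q.eval (-(ω ^ 2))) := by
        have hcalc : ω * (a * q.eval (-(ω ^ 2))) = a ^ 2 * (R ω * Real.sin (θ ω)) := by
          calc ω * (a * q.eval (-(ω ^ 2))) = a * (ω * q.eval (-(ω ^ 2))) := by ring
            _ = a * (a * R ω * Real.sin (θ ω)) := by rw [hkQ ω]
            _ = a ^ 2 * (R ω * Real.sin (θ ω)) := by ring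
        rw [hcalc]
        exact mul_pos ha2 (mul_pos (hR ω) hsin)
      rcases mul_pos_iff.mp hkey with ⟨_, hx⟩ | ⟨hneg, _⟩
      · exact hx.le
      · linarith
    have hlim0 : Tendsto (fun ω : ℝ => a * q.eval (-(ω ^ 2))) (nhdsWithin (0:ℝ) (Set.Ioi 0))
        (nhds (a * q.eval 0)) := by
      have hc : Continuous fun ω : ℝ => a * q.eval (-(ω ^ 2)) :=
        continuous_const.mul ((Polynomial.continuous q).comp ((continuous_pow 2).neg))
      have h2 : Tendsto (fun ω : ℝ => a * q.eval (-(ω ^ 2))) (nhdsWithin (0:ℝ) (Set.Ioi 0))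
          (nhds (a * q.eval (-((0:ℝ) ^ 2)))) :=
        (hc.tendsto 0).mono_left (nhdsWithin_le_nhds (s := Set.Ioi (0:ℝ)))
      simpa using h2
    have hge : 0 ≤ a * q.eval 0 := ge_of_tendsto hlim0 hev
    exact lt_of_le_of_ne hge (Ne.symm (mul_ne_zero ha0 hq0ne))
  have cond1 : 0 < p.eval 0 * q.eval 0 := by
    nlinarith [mul_pos hap haq]
  have interlA : ∀ c₁ c₂ : ℝ, ConsecRoots p c₁ c₂ → ∃! c : ℝ, q.IsRoot c ∧ c₁ < c ∧ c < c₂ := by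
    intro c₁ c₂ hcons
    obtain ⟨hr1, hr2, hlt, hbetween⟩ := hcons
    obtain ⟨k₁, hk₁, he₁⟩ := (charP c₁).mp hr1
    obtain ⟨k₂, hk₂, he₂⟩ := (charP c₂).mp hr2
    subst he₁
    subst he₂
    have hkk : k₂ < k₁ := by
      have := hWlt_rev (2 * k₂ + 1) (2 * k₁ + 1) (by omega) (by omega) (by omega) (by omega) hlt
      omega
    have hsucc : k₁ = k₂ + 1 := by
      by_contra hne
      have hb1 : W (2 * k₁ + 1) < W (2 * (k₂ + 1) + 1) :=
        hWlt (2 * (k₂ + 1) + 1) (2 * k₁ + 1) (by omega) (by omega) (by omega) (by omega)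
          (by omega)
      have hb2 : W (2 * (k₂ + 1) + 1) < W (2 * k₂ + 1) :=
        hWlt (2 * k₂ + 1) (2 * (k₂ + 1) + 1) (by omega) (by omega) (by omega) (by omega)
          (by omega)
      exact hbetween _ hb1 hb2 (hrootP (k₂ + 1) (by omega))
    subst hsucc
    refine ⟨W (2 * k₂ + 2), ⟨hrootQ k₂ (by omega), ?_, ?_⟩, ?_⟩
    · exact hWlt (2 * k₂ + 2) (2 * (k₂ + 1) + 1) (by omega) (by omega) (by omega) (by omega)
        (by omega)
    · exact hWlt (2 * k₂ + 1) (2 * k₂ + 2) (by omega) (by omega) (by omega) (by omega)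
        (by omega)
    · rintro c' ⟨hc'root, hgt, hlt'⟩
      obtain ⟨j, hj, he⟩ := (charQ c').mp hc'root
      subst he
      have l1 := hWlt_rev (2 * k₂ + 1) (2 * j + 2) (by omega) (by omega) (by omega) (by omega)
        hlt'
      have l2 := hWlt_rev (2 * j + 2) (2 * (k₂ + 1) + 1) (by omega) (by omega) (by omega)
        (by omega) hgt
      have hjk : j = k₂ := by omega
      rw [hjk]
  have interlB : ∀ c₁ c₂ : ℝ, ConsecRoots q c₁ c₂ → ∃! c : ℝ, p.IsRoot c ∧ c₁ < c ∧ c < c₂ := by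
    intro c₁ c₂ hcons
    obtain ⟨hr1, hr2, hlt, hbetween⟩ := hcons
    obtain ⟨j₁, hj₁, he₁⟩ := (charQ c₁).mp hr1
    obtain ⟨j₂, hj₂, he₂⟩ := (charQ c₂).mp hr2
    subst he₁
    subst he₂
    have hkk : j₂ < j₁ := by
      have := hWlt_rev (2 * j₂ + 2) (2 * j₁ + 2) (by omega) (by omega) (by omega) (by omega) hlt
      omega
    have hsucc : j₁ = j₂ + 1 := by
      by_contra hne
      have hb1 : W (2 * j₁ + 2) < W (2 * (j₂ + 1) + 2) :=
        hWlt (2 * (j₂ + 1) + 2) (2 * j₁ + 2) (by omega) (by omega) (by omega) (by omega)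
          (by omega)
      have hb2 : W (2 * (j₂ + 1) + 2) < W (2 * j₂ + 2) :=
        hWlt (2 * j₂ + 2) (2 * (j₂ + 1) + 2) (by omega) (by omega) (by omega) (by omega)
          (by omega)
      exact hbetween _ hb1 hb2 (hrootQ (j₂ + 1) (by omega))
    subst hsucc
    refine ⟨W (2 * (j₂ + 1) + 1), ⟨hrootP (j₂ + 1) (by omega), ?_, ?_⟩, ?_⟩
    · exact hWlt (2 * (j₂ + 1) + 1) (2 * (j₂ + 1) + 2) (by omega) (by omega) (by omega)
        (by omega) (by omega)
    · exact hWlt (2 * j₂ + 2) (2 * (j₂ + 1) + 1) (by omega) (by omega) (by omega) (by omega)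
        (by omega)
    · rintro c' ⟨hc'root, hgt, hlt'⟩
      obtain ⟨k, hk, he⟩ := (charP c').mp hc'root
      subst he
      have l1 := hWlt_rev (2 * j₂ + 2) (2 * k + 1) (by omega) (by omega) (by omega) (by omega)
        hlt'
      have l2 := hWlt_rev (2 * k + 1) (2 * (j₂ + 1) + 2) (by omega) (by omega) (by omega)
        (by omega) hgt
      have hjk : k = j₂ + 1 := by omega
      rw [hjk]
  have cond7 : ∀ x : ℝ, q.IsRoot x → ∃ y : ℝ, p.IsRoot y ∧ x < y := by
    intro x hx
    obtain ⟨j, hj, he⟩ := (charQ x).mp hx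
    subst he
    exact ⟨W (2 * j + 1), hrootP j (by omega),
      hWlt (2 * j + 1) (2 * j + 2) (by omega) (by omega) (by omega) (by omega) (by omega)⟩
  exact ⟨cond1, cond2, cond3, multP, multQ, ⟨interlA, interlB⟩, cond7⟩


theorem stmt8 (f p q : Polynomial ℝ)
    (hdec : f = p.comp (Polynomial.X ^ 2) + Polynomial.X * q.comp (Polynomial.X ^ 2))
    (hdeg : 0 < f.natDegree) :
    (∀ z : ℂ, Polynomial.aeval z f = 0 → z.re < 0) ↔
      (0 < p.eval 0 * q.eval 0 ∧
       (∀ z : ℂ, Polynomial.aeval z p = 0 → ∃ x : ℝ, x < 0 ∧ z = (x : ℂ)) ∧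
       (∀ z : ℂ, Polynomial.aeval z q = 0 → ∃ x : ℝ, x < 0 ∧ z = (x : ℂ)) ∧
       (∀ x : ℝ, p.rootMultiplicity x ≤ 1) ∧
       (∀ x : ℝ, q.rootMultiplicity x ≤ 1) ∧
       StrictlyInterlace p q ∧
       (∀ x : ℝ, q.IsRoot x → ∃ y : ℝ, p.IsRoot y ∧ x < y)) := by
  constructor
  · intro h
    exact forward f p q hdec hdeg h
  · rintro ⟨h1, h2, h3, h4, h5, h6, h7⟩
    exact converse f p q hdec h1 h2 h3 h4 h5 h6 h7
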